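/- For every integer k ≥ 1: ((F(6k-1)-1)/2)*F(6k) + ((F(6k-1)-1)/2)*F(6k+1) = (F(6k)-1)*(F(6k+1)-1)/2. -/

import Mathlib

theorem cassini (n : ℕ) : (Nat.fib (n+2) : ℤ) * Nat.fib n - (Nat.fib (n+1))^2 = (-1)^(n+1) := by
  induction n with
  | zero => simp
  | succ n ih =>
    have hf : (Nat.fib (n+2) : ℤ) = Nat.fib n + Nat.fib (n+1) := by
      push_cast [Nat.fib_add_two (n := n)]; ring
    have hg : (Nat.fib (n+3) : ℤ) = Nat.fib (n+1) + Nat.fib (n+2) := by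
      push_cast [show n+3 = (n+1)+2 from rfl, Nat.fib_add_two (n := n+1)]; ring
    rw [show n+1+2 = n+3 from rfl, hg]
    linear_combination (-1 : ℤ) * ih - (Nat.fib (n+2) : ℤ) * hf

theorem stmt_7 (k : ℕ) (hk : 1 ≤ k) :
    (Nat.fib (6 * k - 1) - 1) / 2 * Nat.fib (6 * k) +
      (Nat.fib (6 * k - 1) - 1) / 2 * Nat.fib (6 * k + 1) =
    (Nat.fib (6 * k) - 1) * (Nat.fib (6 * k + 1) - 1) / 2 := by
  obtain ⟨k, rfl⟩ := Nat.exists_eq_add_of_le hk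
  set n := 6 * (1 + k) - 1 with hn
  have h1 : 6 * (1 + k) = n + 1 := by omega
  have h2 : 6 * (1 + k) + 1 = n + 2 := by omega
  rw [h1]
  set a := Nat.fib n
  set b := Nat.fib (n + 1)
  set c := Nat.fib (n + 1 + 1)
  -- cassini : c*a - b^2 = (-1)^(n+1) = 1 since n odd
  have hodd : (-1 : ℤ)^(n+1) = 1 := by
    have : Even (n+1) := by refine ⟨3*(1+k), by omega⟩
    exact Even.neg_one_pow this
  have hcas : (c : ℤ) * a - (b : ℤ)^2 = 1 := by rw [← hodd]; exact cassini n
  have hcb : c = a + b := Nat.fib_add_two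
  -- parity: b even
  have hbe : 2 ∣ b := by
    have : Nat.fib 3 ∣ Nat.fib (n+1) := Nat.fib_dvd 3 (n+1) ⟨2*(1+k), by omega⟩
    rw [show Nat.fib 3 = 2 from rfl] at this; exact this
  have hae : a % 2 = 1 := by
    have hcop := Nat.fib_coprime_fib_succ n
    rcases Nat.even_or_odd a with h | h
    · exfalso
      have : 2 ∣ Nat.gcd a b := Nat.dvd_gcd h.two_dvd hbe
      rw [hcop] at this; omega
    · rcases h with ⟨t, ht⟩; omega
  have ha1 : 1 ≤ a := by omega
  have hb1 : 1 ≤ b := by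
    have := Nat.fib_pos.mpr (show 0 < n + 1 by omega); omega
  have hc1 : 1 ≤ c := by omega
  obtain ⟨s, hs⟩ : ∃ s, a = 2 * s + 1 := ⟨a / 2, by omega⟩
  have hdiv : (a - 1) / 2 = s := by omega
  rw [hdiv]
  have key : 2 * (s * b + s * c) = (b - 1) * (c - 1) := by
    zify [hb1, hc1]
    have hsz : (a : ℤ) = 2 * s + 1 := by exact_mod_cast hs
    have hcz : (c : ℤ) = a + b := by exact_mod_cast hcb
    rw [hcz, hsz] at hcas ⊢
    linear_combination hcas
  omega
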